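/- Let M₁ and M₂ be finitely generated free ℤ-modules of ranks r₁ and r₂, equipped with symmetric bilinear forms B₁ and B₂ respectively. Let B be the orthogonal direct sum form on M₁ × M₂, defined by B((x₁,x₂),(y₁,y₂)) = B₁(x₁,y₁) + B₂(x₂,y₂). If B is isometric (via a ℤ-linear equivalence) to the standard negative definite form on ℤ^{r₁+r₂} given by ⟨x,y⟩ = −∑ᵢ xᵢyᵢ, then B₁ is isometric to the standard negative definite form on ℤ^{r₁} given by ⟨x,y⟩ = −∑ᵢ xᵢyᵢ. -/

import Mathlib

/-- If the orthogonal direct sum of two symmetric bilinear forms on finitely generated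
free ℤ-modules is isometric to the standard negative definite form on `ℤ^(r₁+r₂)`,
then the first summand is isometric to the standard negative definite form on `ℤ^r₁`. -/
theorem direct_summand_of_neg_definite_diagonalizable
    (M₁ M₂ : Type*) [AddCommGroup M₁] [AddCommGroup M₂]
    [Module ℤ M₁] [Module ℤ M₂]
    [Module.Free ℤ M₁] [Module.Free ℤ M₂]
    [Module.Finite ℤ M₁] [Module.Finite ℤ M₂]
    (r₁ r₂ : ℕ)
    (hr₁ : Module.finrank ℤ M₁ = r₁) (hr₂ : Module.finrank ℤ M₂ = r₂)
    (B₁ : M₁ →ₗ[ℤ] M₁ →ₗ[ℤ] ℤ) (B₂ : M₂ →ₗ[ℤ] M₂ →ₗ[ℤ] ℤ)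
    (hB₁ : ∀ x y, B₁ x y = B₁ y x) (hB₂ : ∀ x y, B₂ x y = B₂ y x)
    (h : ∃ e : (M₁ × M₂) ≃ₗ[ℤ] (Fin (r₁ + r₂) → ℤ),
      ∀ p q : M₁ × M₂,
        B₁ p.1 q.1 + B₂ p.2 q.2 = -∑ i, e p i * e q i) :
    ∃ e₁ : M₁ ≃ₗ[ℤ] (Fin r₁ → ℤ),
      ∀ x y : M₁, B₁ x y = -∑ i, e₁ x i * e₁ y i := by
  classical
  obtain ⟨e, he⟩ := h
  set f : Fin (r₁ + r₂) → M₁ × M₂ := fun i => e.symm (Pi.single i 1) with hf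
  have hef : ∀ i, e (f i) = Pi.single i 1 := fun i => e.apply_symm_apply _
  -- pairing with f i picks out the i-th coordinate
  have key : ∀ (p : M₁ × M₂) (i : Fin (r₁ + r₂)),
      B₁ p.1 (f i).1 + B₂ p.2 (f i).2 = -(e p i) := by
    intro p i
    rw [he p (f i), hef]
    congr 1
    rw [Finset.sum_eq_single i]
    · simp
    · intro b _ hb
      simp [Pi.single_apply, hb]
    · simp
  -- negative definiteness of B₁ and B₂
  have hdiag : ∀ p : M₁ × M₂, B₁ p.1 p.1 + B₂ p.2 p.2 ≤ 0 := by
    intro p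
    rw [he p p]
    simp only [neg_nonpos]
    exact Finset.sum_nonneg fun i _ => mul_self_nonneg _
  have hzero : ∀ p : M₁ × M₂, B₁ p.1 p.1 + B₂ p.2 p.2 = 0 → p = 0 := by
    intro p hp
    rw [he p p, neg_eq_zero] at hp
    have h0 : ∀ i ∈ Finset.univ, e p i * e p i = 0 :=
      (Finset.sum_eq_zero_iff_of_nonneg fun i _ => mul_self_nonneg _).mp hp
    have : e p = 0 := funext fun i => mul_self_eq_zero.mp (h0 i (Finset.mem_univ i))
    have := congrArg e.symm this
    simpa using this
  have hd1 : ∀ x : M₁, B₁ x x ≤ 0 := by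
    intro x
    have := hdiag (x, 0)
    simpa using this
  have hd2 : ∀ y : M₂, B₂ y y ≤ 0 := by
    intro y
    have := hdiag (0, y)
    simpa using this
  have hd1' : ∀ x : M₁, B₁ x x = 0 → x = 0 := by
    intro x hx
    have := hzero (x, 0) (by simpa using hx)
    simpa [Prod.ext_iff] using this
  have hd2' : ∀ y : M₂, B₂ y y = 0 → y = 0 := by
    intro y hy
    have := hzero (0, y) (by simpa using hy)
    simpa [Prod.ext_iff] using this
  -- each f i lies in one of the factors
  have hsplit : ∀ i, (f i).1 = 0 ∨ (f i).2 = 0 := by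
    intro i
    have hk := key (f i) i
    rw [hef] at hk
    simp only [Pi.single_apply, if_pos rfl] at hk
    have h1 := hd1 (f i).1
    have h2 := hd2 (f i).2
    rcases (by omega : B₁ (f i).1 (f i).1 = 0 ∨ B₂ (f i).2 (f i).2 = 0) with h' | h'
    · exact Or.inl (hd1' _ h')
    · exact Or.inr (hd2' _ h')
  set S : Finset (Fin (r₁ + r₂)) := Finset.univ.filter (fun i => (f i).1 ≠ 0) with hS
  have hmemS : ∀ i, i ∈ S ↔ (f i).1 ≠ 0 := by
    intro i; simp [hS]
  have hout : ∀ (x : M₁) (i : Fin (r₁ + r₂)), i ∉ S → e (x, 0) i = 0 := by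
    intro x i hi
    have h1 : (f i).1 = 0 := by
      by_contra hc
      exact hi ((hmemS i).mpr hc)
    have hk := key (x, 0) i
    rw [h1] at hk
    simp at hk
    linarith [hk]
  have hin : ∀ i ∈ S, (f i).2 = 0 := by
    intro i hi
    rcases hsplit i with h' | h'
    · exact absurd h' ((hmemS i).mp hi)
    · exact h'
  -- the linear map to coordinates in S
  let φ : M₁ →ₗ[ℤ] ({ i // i ∈ S } → ℤ) :=
    (LinearMap.funLeft ℤ ℤ (fun j : { i // i ∈ S } => j.1)).comp
      ({ toFun := fun x => e (x, 0)
         map_add' := fun x y => by rw [← map_add, Prod.mk_add_mk, add_zero]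
         map_smul' := fun c x => by
           have := map_zsmul e.toAddMonoidHom c (x, 0)
           simp only [Prod.smul_mk, smul_zero, RingHom.id_apply] at this ⊢
           convert this using 2 <;> simp
           exact ⟨int_smul_eq_zsmul _ c x, (zsmul_zero c).symm⟩ } : M₁ →ₗ[ℤ] (Fin (r₁ + r₂) → ℤ))
  have hφ : ∀ (x : M₁) (j : { i // i ∈ S }), φ x j = e (x, 0) j.1 := fun _ _ => rfl
  have hinj : Function.Injective φ := by
    intro x y hxy
    have hxy' : e (x, 0) = e (y, 0) := by
      funext i
      by_cases hi : i ∈ S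
      · exact congrFun hxy ⟨i, hi⟩
      · rw [hout x i hi, hout y i hi]
    have := e.injective hxy'
    exact (Prod.ext_iff.mp this).1
  have hsurj : Function.Surjective φ := by
    intro c
    set v : Fin (r₁ + r₂) → ℤ := fun i => if h : i ∈ S then c ⟨i, h⟩ else 0 with hv
    set p := e.symm v with hp
    have hvs : v = ∑ i, v i • Pi.single i 1 := by
      funext j
      simp [Pi.single_apply, Finset.sum_apply]
    have hpsum : p = ∑ i, v i • f i := by
      apply e.injective
      rw [hp, e.apply_symm_apply, map_sum]
      simp only [map_smul, hef]
      exact hvs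
    have hp2 : p.2 = 0 := by
      have : p.2 = ∑ i, v i • (f i).2 := by
        rw [hpsum]
        simp [Prod.snd_sum]
      rw [this]
      apply Finset.sum_eq_zero
      intro i _
      by_cases hi : i ∈ S
      · rw [hin i hi, zsmul_zero]
      · simp [hv, hi]
    refine ⟨p.1, ?_⟩
    funext j
    rw [hφ]
    have : ((p.1 : M₁), (0 : M₂)) = p := by
      rw [Prod.ext_iff]; exact ⟨rfl, hp2.symm⟩
    rw [this, hp, e.apply_symm_apply, hv]
    simp [j.2]
  -- cardinality of S is r₁
  have hcard : Fintype.card { i // i ∈ S } = r₁ := by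
    have h2 := LinearEquiv.finrank_eq (LinearEquiv.ofBijective φ ⟨hinj, hsurj⟩)
    rw [hr₁, Module.finrank_pi] at h2
    omega
  let eS : Fin r₁ ≃ { i // i ∈ S } := (Fintype.equivFinOfCardEq hcard).symm
  refine ⟨(LinearEquiv.ofBijective φ ⟨hinj, hsurj⟩).trans
    (LinearEquiv.funCongrLeft ℤ ℤ eS), ?_⟩
  intro x y
  have hxy : B₁ x y = -∑ i, e (x, 0) i * e (y, 0) i := by
    have := he (x, 0) (y, 0)
    simpa using this
  rw [hxy]
  congr 1
  have step1 : ∑ i, e (x, 0) i * e (y, 0) i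
      = ∑ i ∈ S, e (x, 0) i * e (y, 0) i := by
    symm
    apply Finset.sum_subset (Finset.subset_univ S)
    intro i _ hi
    rw [hout x i hi, zero_mul]
  rw [step1, ← Finset.sum_coe_sort S (fun i => e (x, 0) i * e (y, 0) i)]
  rw [← Equiv.sum_comp eS (fun j : { i // i ∈ S } => e (x, 0) j.1 * e (y, 0) j.1)]
  apply Finset.sum_congr rfl
  intro i _
  rfl
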